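/- Under the mixture prior ψ δ₀ + (1−ψ) N(0, h σ_o²) for θ and likelihood θ̂_o | θ ~ N(θ, σ_o²), the p-value for prior-data conflict computed by conditioning on the latent mixture indicator equals P(θ̂_o) = ψ(1 − G₁(z_o²)) + (1−ψ)(1 − G₁(z_o²/(1+h))), where z_o = θ̂_o/σ_o and G₁ is the cdf of the chi-squared distribution with one degree of freedom. -/

import Mathlib

open MeasureTheory ProbabilityTheory Filter Real Topology

noncomputable def nd (x μ τ2 : ℝ) : ℝ :=
  (Real.sqrt (2 * Real.pi * τ2))⁻¹ * Real.exp (-(x - μ) ^ 2 / (2 * τ2))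

noncomputable def G1 (u : ℝ) : ℝ :=
  ((gaussianReal 0 1) {x | x ^ 2 ≤ u}).toReal

lemma nd_set_eq (τ2 θ : ℝ) (hτ : 0 < τ2) :
    {t : ℝ | nd t 0 τ2 ≤ nd θ 0 τ2} = {t : ℝ | θ ^ 2 ≤ t ^ 2} := by
  ext t
  have hC : (0 : ℝ) < (Real.sqrt (2 * Real.pi * τ2))⁻¹ := by positivity
  simp only [nd, Set.mem_setOf_eq, sub_zero]
  rw [mul_le_mul_iff_right₀ hC, Real.exp_le_exp,
    div_le_div_iff₀ (by linarith : (0:ℝ) < 2 * τ2) (by linarith : (0:ℝ) < 2 * τ2)]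
  constructor <;> intro <;> nlinarith

lemma key (τ2 θ : ℝ) (hτ : 0 < τ2) :
    ((gaussianReal 0 τ2.toNNReal) {t | nd t 0 τ2 ≤ nd θ 0 τ2}).toReal
      = 1 - G1 (θ ^ 2 / τ2) := by
  rw [nd_set_eq _ _ hτ]
  have hmap : (gaussianReal 0 1).map (Real.sqrt τ2 * ·) = gaussianReal 0 τ2.toNNReal := by
    rw [gaussianReal_map_const_mul]
    congr 1
    · simp
    · ext
      simp [Real.sq_sqrt hτ.le, Real.coe_toNNReal _ hτ.le]
  have hmeas : MeasurableSet {t : ℝ | θ ^ 2 ≤ t ^ 2} :=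
    measurableSet_le measurable_const (by measurability)
  rw [← hmap, Measure.map_apply (by fun_prop) hmeas]
  have hpre : (Real.sqrt τ2 * ·) ⁻¹' {t : ℝ | θ ^ 2 ≤ t ^ 2}
      = {x : ℝ | θ ^ 2 / τ2 ≤ x ^ 2} := by
    ext x
    simp only [Set.mem_preimage, Set.mem_setOf_eq, mul_pow, Real.sq_sqrt hτ.le]
    rw [div_le_iff₀ hτ]
    constructor <;> intro <;> nlinarith
  rw [hpre]
  set u := θ ^ 2 / τ2 with hu
  have hnull : (gaussianReal 0 1) {x : ℝ | x ^ 2 = u} = 0 := by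
    refine gaussianReal_absolutelyContinuous 0 one_ne_zero ?_
    have hsub : {x : ℝ | x ^ 2 = u} ⊆ {Real.sqrt u, -Real.sqrt u} := by
      intro x hx
      have habs : Real.sqrt u = |x| := by
        rw [← hx, Real.sqrt_sq_eq_abs]
      have : x = Real.sqrt u ∨ x = -Real.sqrt u := by
        rcases abs_cases x with ⟨h1, _⟩ | ⟨h1, _⟩
        · left; rw [habs, h1]
        · right; rw [habs, h1, neg_neg]
      simpa [Set.mem_insert_iff] using this
    exact measure_mono_null hsub (((Set.finite_singleton _).insert _).measure_zero volume)
  have hcompl : {x : ℝ | u ≤ x ^ 2} = {x : ℝ | x ^ 2 < u}ᶜ := by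
    ext x; simp [not_lt]
  have hlt : (gaussianReal 0 1) {x : ℝ | x ^ 2 < u} = (gaussianReal 0 1) {x : ℝ | x ^ 2 ≤ u} := by
    have hun : {x : ℝ | x ^ 2 ≤ u} = {x : ℝ | x ^ 2 < u} ∪ {x : ℝ | x ^ 2 = u} := by
      ext x; simp [le_iff_lt_or_eq]
    rw [hun]
    refine le_antisymm (measure_mono Set.subset_union_left) ?_
    calc (gaussianReal 0 1) ({x : ℝ | x ^ 2 < u} ∪ {x : ℝ | x ^ 2 = u})
        ≤ (gaussianReal 0 1) {x : ℝ | x ^ 2 < u} + (gaussianReal 0 1) {x : ℝ | x ^ 2 = u} :=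
          measure_union_le _ _
      _ = (gaussianReal 0 1) {x : ℝ | x ^ 2 < u} := by rw [hnull, add_zero]
  rw [hcompl, prob_compl_eq_one_sub (measurableSet_lt (by measurability) measurable_const), hlt,
    G1, ENNReal.toReal_sub_of_le prob_le_one ENNReal.one_ne_top, ENNReal.toReal_one]

theorem stmt7 (θo σo h ψ zo : ℝ) (hσo : 0 < σo) (hh : 0 < h) (hψ0 : 0 ≤ ψ) (hψ1 : ψ ≤ 1)
    (hz : zo = θo / σo) :
    ψ * ((gaussianReal 0 ((σo ^ 2).toNNReal))
          {t | nd t 0 (σo ^ 2) ≤ nd θo 0 (σo ^ 2)}).toReal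
      + (1 - ψ) * ((gaussianReal 0 ((σo ^ 2 * (1 + h)).toNNReal))
          {t | nd t 0 (σo ^ 2 * (1 + h)) ≤ nd θo 0 (σo ^ 2 * (1 + h))}).toReal
      = ψ * (1 - G1 (zo ^ 2)) + (1 - ψ) * (1 - G1 (zo ^ 2 / (1 + h))) := by
  have h1 : (0:ℝ) < σo ^ 2 := by positivity
  have h2 : (0:ℝ) < σo ^ 2 * (1 + h) := by positivity
  rw [key _ θo h1, key _ θo h2, hz]
  have e1 : θo ^ 2 / σo ^ 2 = (θo / σo) ^ 2 := by
    field_simp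
  have e2 : θo ^ 2 / (σo ^ 2 * (1 + h)) = (θo / σo) ^ 2 / (1 + h) := by
    field_simp
  rw [e1, e2]
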